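/- Let G be a simple graph on n ≥ 2 vertices with vertex set V. The number of tuples (S, f) where S is a 2-element subset of V and f assigns to each of the n−1 colors 2,…,n an element of V, such that every vertex of V is either in S or in the image of f, and moreover the multiset S together with the values of f uses exactly n+1 vertex slots covering all n vertices, equals n!(n²+n−2)/4. -/

import Mathlib

set_option maxHeartbeats 1600000

open Finset Function

private lemma aux_some {M : ℕ} {j k : Fin (M + 1)} (h : k ≠ j) :
    ∃ x : Fin M, finSuccEquiv' j k = some x ∧ j.succAbove x = k := by
  cases hx : finSuccEquiv' j k with
  | none =>
      exfalso
      apply h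
      have := congrArg (finSuccEquiv' j).symm hx
      simpa using this
  | some x =>
      refine ⟨x, rfl, ?_⟩
      have := congrArg (finSuccEquiv' j).symm hx
      simpa using this.symm

private lemma aux_card_lt_pairs (M : ℕ) :
    2 * ((univ : Finset (Fin M × Fin M)).filter fun p => p.1 < p.2).card = M * M - M := by
  have key := Finset.card_filter_add_card_filter_not
    (s := (univ : Finset (Fin M)).offDiag) (p := fun p => p.1 < p.2)
  have e1 : ((univ : Finset (Fin M)).offDiag.filter fun p => p.1 < p.2)
      = (univ : Finset (Fin M × Fin M)).filter fun p => p.1 < p.2 := by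
    ext p
    simp only [mem_filter, Finset.mem_offDiag, mem_univ, true_and]
    exact ⟨fun h => h.2, fun h => ⟨h.ne, h⟩⟩
  have e2 : ((univ : Finset (Fin M)).offDiag.filter fun p => ¬ p.1 < p.2).card
      = ((univ : Finset (Fin M × Fin M)).filter fun p => p.1 < p.2).card := by
    apply Finset.card_nbij' (i := Prod.swap) (j := Prod.swap)
    · intro a ha
      simp only [Finset.mem_coe, mem_filter, Finset.mem_offDiag, mem_univ, true_and] at ha ⊢
      exact lt_of_le_of_ne (not_lt.mp ha.2) (Ne.symm ha.1)
    · intro a ha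
      simp only [Finset.mem_coe, mem_filter, Finset.mem_offDiag, mem_univ, true_and] at ha ⊢
      exact ⟨Ne.symm ha.ne, not_lt.mpr ha.le⟩
    · intro a _; exact Prod.swap_swap a
    · intro a _; exact Prod.swap_swap a
  have e3 : ((univ : Finset (Fin M)).offDiag).card = M * M - M := by
    rw [Finset.offDiag_card, card_univ, Fintype.card_fin]
  rw [e1, e2, e3] at key
  omega

private def glue {W : Type*} (junk : W) {M : ℕ} (i j : Fin (M + 1)) (e : Fin M ↪ W) :
    Fin (M + 1) → W :=
  fun k => ((finSuccEquiv' j) (if k = j then i else k)).elim junk ⇑e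

private lemma glue_succAbove {W : Type*} (junk : W) {M : ℕ} (i j : Fin (M + 1))
    (e : Fin M ↪ W) (x : Fin M) : glue junk i j e (j.succAbove x) = e x := by
  unfold glue
  rw [if_neg (Fin.succAbove_ne j x), finSuccEquiv'_succAbove]
  rfl

private lemma glue_apply_ne {W : Type*} (junk : W) {M : ℕ} (i j : Fin (M + 1))
    (e : Fin M ↪ W) {k : Fin (M + 1)} (hk : k ≠ j) :
    ∃ x, j.succAbove x = k ∧ glue junk i j e k = e x := by
  obtain ⟨x, hx1, hx2⟩ := aux_some hk
  exact ⟨x, hx2, by unfold glue; rw [if_neg hk, hx1]; rfl⟩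

private lemma glue_at {W : Type*} (junk : W) {M : ℕ} (i j : Fin (M + 1))
    (e : Fin M ↪ W) (hij : i ≠ j) :
    ∃ x, j.succAbove x = i ∧ glue junk i j e j = e x := by
  obtain ⟨x, hx1, hx2⟩ := aux_some hij
  exact ⟨x, hx2, by unfold glue; rw [if_pos rfl, hx1]; rfl⟩

private lemma glue_image {W : Type*} [DecidableEq W] (junk : W) {M : ℕ} (i j : Fin (M + 1))
    (e : Fin M ↪ W) (hij : i ≠ j) :
    univ.image (glue junk i j e) = univ.image ⇑e := by
  apply Finset.Subset.antisymm
  · intro v hv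
    obtain ⟨k, -, rfl⟩ := mem_image.mp hv
    by_cases hk : k = j
    · subst hk
      obtain ⟨x, -, hval⟩ := glue_at junk i k e hij
      rw [hval]
      exact mem_image_of_mem _ (mem_univ x)
    · obtain ⟨x, -, hval⟩ := glue_apply_ne junk i j e hk
      rw [hval]
      exact mem_image_of_mem _ (mem_univ x)
  · intro v hv
    obtain ⟨x, -, rfl⟩ := mem_image.mp hv
    rw [← glue_succAbove junk i j e x]
    exact mem_image_of_mem _ (mem_univ _)

private lemma glue_collision {W : Type*} (junk : W) {M : ℕ} (i j : Fin (M + 1))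
    (e : Fin M ↪ W) (hij : i < j) (k : Fin (M + 1)) :
    (∃ l, l ≠ k ∧ glue junk i j e l = glue junk i j e k) ↔ (k = i ∨ k = j) := by
  constructor
  · rintro ⟨l, hlk, hval⟩
    by_contra hcon
    push_neg at hcon
    obtain ⟨hki, hkj⟩ := hcon
    obtain ⟨xk, hxk, hfk⟩ := glue_apply_ne junk i j e hkj
    by_cases hl : l = j
    · subst hl
      obtain ⟨xi, hxi, hfj⟩ := glue_at junk i l e hij.ne
      rw [hfj, hfk] at hval
      have hx := e.injective hval
      subst hx
      exact hki (by rw [← hxk]; exact hxi.symm ▸ rfl)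
    · obtain ⟨xl, hxl, hfl⟩ := glue_apply_ne junk i j e hl
      rw [hfl, hfk] at hval
      have hx := e.injective hval
      subst hx
      exact hlk (by rw [← hxl, hxk])
  · rintro (rfl | rfl)
    · refine ⟨j, hij.ne', ?_⟩
      obtain ⟨x, hx, hj⟩ := glue_at junk k j e hij.ne
      obtain ⟨x', hx', hi⟩ := glue_apply_ne junk k j e hij.ne
      rw [hj, hi]
      congr 1
      exact Fin.succAbove_right_injective (by rw [hx, hx'])
    · refine ⟨i, hij.ne, ?_⟩
      obtain ⟨x, hx, hj⟩ := glue_at junk i k e hij.ne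
      obtain ⟨x', hx', hi⟩ := glue_apply_ne junk i k e hij.ne
      rw [hj, hi]
      congr 1
      exact Fin.succAbove_right_injective (by rw [hx, hx'])

/-- Combinatorial core of the 0-cell count for `r⃗ = (2,1,…,1)`: the number of
pairs `(S, f)` of a 2-subset `S ⊆ V` and a function `f` from the `n−1`
remaining colors to `V` which together cover all of `V` equals
`n!(n²+n−2)/4`. -/
theorem count_covering_pairs {V : Type*} [Fintype V] [DecidableEq V]
    (G : SimpleGraph V) (n : ℕ) (hn : 2 ≤ n) (h : Fintype.card V = n) :
    Nat.card {p : Finset V × (Fin (n - 1) → V) //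
        p.1.card = 2 ∧ ∀ v : V, v ∈ p.1 ∨ ∃ k, p.2 k = v} =
      n.factorial * (n ^ 2 + n - 2) / 4 := by
  obtain ⟨r, rfl⟩ : ∃ r, n = r + 2 := ⟨n - 2, by omega⟩
  show Nat.card {p : Finset V × (Fin (r + 1) → V) //
      p.1.card = 2 ∧ ∀ v : V, v ∈ p.1 ∨ ∃ k, p.2 k = v}
    = (r + 2).factorial * ((r + 2) ^ 2 + (r + 2) - 2) / 4
  have hne : Nonempty V := by
    rw [← Fintype.card_pos_iff, h]; omega
  obtain ⟨junk⟩ := hne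
  rw [Nat.card_eq_fintype_card, Fintype.card_subtype]
  have hsplit := Finset.card_filter_add_card_filter_not
    (s := (univ : Finset (Finset V × (Fin (r + 1) → V))).filter
      (fun p => p.1.card = 2 ∧ ∀ v : V, v ∈ p.1 ∨ ∃ k, p.2 k = v))
    (p := fun p => Function.Injective p.2)
  simp only [Finset.filter_filter] at hsplit
  -- Case A : injective f
  have hA : ((univ : Finset (Finset V × (Fin (r + 1) → V))).filter
      (fun p => (p.1.card = 2 ∧ ∀ v : V, v ∈ p.1 ∨ ∃ k, p.2 k = v)
        ∧ Function.Injective p.2)).card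
      = (r + 2).descFactorial (r + 1) * (r + 1) := by
    have key : ((univ : Finset ((Fin (r + 1) ↪ V) × Fin (r + 1)))).card
        = ((univ : Finset (Finset V × (Fin (r + 1) → V))).filter
          (fun p => (p.1.card = 2 ∧ ∀ v : V, v ∈ p.1 ∨ ∃ k, p.2 k = v)
            ∧ Function.Injective p.2)).card := by
      apply Finset.card_bij
        (i := fun (a : (Fin (r + 1) ↪ V) × Fin (r + 1)) _ =>
          ((univ \ univ.image ⇑a.1) ∪ {a.1 a.2}, ⇑a.1))
      · intro a _
        simp only [mem_filter, mem_univ, true_and]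
        refine ⟨⟨?_, ?_⟩, a.1.injective⟩
        · have h1 : (univ \ univ.image ⇑a.1).card = 1 := by
            rw [card_sdiff_of_subset (subset_univ _), Finset.card_image_of_injective _ a.1.injective]
            simp only [card_univ, Fintype.card_fin, h]
            omega
          have hd : Disjoint (univ \ univ.image ⇑a.1) {a.1 a.2} := by
            rw [Finset.disjoint_singleton_right, mem_sdiff]
            push_neg
            intro _
            exact mem_image_of_mem _ (mem_univ _)
          rw [card_union_of_disjoint hd, h1, card_singleton]
        · intro v
          by_cases hv : v ∈ univ.image ⇑a.1
          · obtain ⟨k, -, hk⟩ := mem_image.mp hv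
            exact Or.inr ⟨k, hk⟩
          · exact Or.inl (mem_union_left _ (mem_sdiff.mpr ⟨mem_univ v, hv⟩))
      · intro a1 h1 a2 h2 heq
        simp only [Prod.mk.injEq] at heq
        obtain ⟨hS, hfun⟩ := heq
        have he : a1.1 = a2.1 := DFunLike.coe_injective hfun
        have hk : a1.1 a1.2 = a2.1 a2.2 := by
          have hmem : a1.1 a1.2 ∈ (univ \ univ.image ⇑a2.1) ∪ {a2.1 a2.2} := by
            rw [← hS]; exact mem_union_right _ (mem_singleton_self _)
          rcases mem_union.mp hmem with hm | hm
          · exfalso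
            rw [← he] at hm
            exact (mem_sdiff.mp hm).2 (mem_image_of_mem _ (mem_univ _))
          · exact mem_singleton.mp hm
        have hk2 : a1.2 = a2.2 := a2.1.injective (by rw [he] at hk; exact hk)
        exact Prod.ext he hk2
      · intro b hb
        simp only [mem_filter, mem_univ, true_and] at hb
        obtain ⟨⟨hcard, hcov⟩, hinj⟩ := hb
        have hU : (univ \ univ.image b.2).card = 1 := by
          rw [card_sdiff_of_subset (subset_univ _), Finset.card_image_of_injective _ hinj]
          simp only [card_univ, Fintype.card_fin, h]
          omega
        obtain ⟨v₀, hv₀⟩ := Finset.card_eq_one.mp hU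
        have hv₀im : v₀ ∉ univ.image b.2 := by
          have hm : v₀ ∈ univ \ univ.image b.2 := by
            rw [hv₀]; exact mem_singleton_self _
          exact (mem_sdiff.mp hm).2
        have hv₀S : v₀ ∈ b.1 := by
          rcases hcov v₀ with hh | ⟨k, hk⟩
          · exact hh
          · exact absurd (mem_image.mpr ⟨k, mem_univ _, hk⟩) hv₀im
        have hErase : (b.1.erase v₀).card = 1 := by
          rw [card_erase_of_mem hv₀S, hcard]
        obtain ⟨s₀, hs₀⟩ := Finset.card_eq_one.mp hErase
        have hs₀mem : s₀ ∈ b.1.erase v₀ := by rw [hs₀]; exact mem_singleton_self _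
        have hs₀ne : s₀ ≠ v₀ := (mem_erase.mp hs₀mem).1
        have hs₀im : s₀ ∈ univ.image b.2 := by
          by_contra hcon
          have hm : s₀ ∈ univ \ univ.image b.2 := mem_sdiff.mpr ⟨mem_univ _, hcon⟩
          rw [hv₀] at hm
          exact hs₀ne (mem_singleton.mp hm)
        obtain ⟨k, -, hk⟩ := mem_image.mp hs₀im
        refine ⟨(⟨b.2, hinj⟩, k), mem_univ _, ?_⟩
        refine Prod.ext ?_ rfl
        show (univ \ univ.image b.2) ∪ {b.2 k} = b.1
        rw [hv₀, hk, ← Finset.insert_erase hv₀S, hs₀, Finset.insert_eq]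
    rw [← key, card_univ, Fintype.card_prod, Fintype.card_embedding_eq,
      Fintype.card_fin, h]
  -- Case B : non-injective f
  have hB1 : ((univ : Finset (Fin (r + 1) → V)).filter
        (fun f => (univ.image f).card = r)).card
      = ((univ : Finset (Finset V × (Fin (r + 1) → V))).filter
        (fun p => (p.1.card = 2 ∧ ∀ v : V, v ∈ p.1 ∨ ∃ k, p.2 k = v)
          ∧ ¬ Function.Injective p.2)).card := by
    apply Finset.card_bij (i := fun f _ => ((univ \ univ.image f : Finset V), f))
    · intro f hf
      simp only [mem_filter, mem_univ, true_and] at hf ⊢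
      refine ⟨⟨?_, ?_⟩, ?_⟩
      · rw [card_sdiff_of_subset (subset_univ _), hf, card_univ, h]
        omega
      · intro v
        by_cases hv : v ∈ univ.image f
        · obtain ⟨k, -, hk⟩ := mem_image.mp hv
          exact Or.inr ⟨k, hk⟩
        · exact Or.inl (mem_sdiff.mpr ⟨mem_univ _, hv⟩)
      · intro hinj
        rw [Finset.card_image_of_injective _ hinj, card_univ, Fintype.card_fin] at hf
        omega
    · intro f1 _ f2 _ heq
      exact congrArg Prod.snd heq
    · intro b hb
      simp only [mem_filter, mem_univ, true_and] at hb
      obtain ⟨⟨hcard, hcov⟩, hninj⟩ := hb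
      have hle : (univ.image b.2).card ≤ r + 1 := by
        refine le_trans Finset.card_image_le ?_
        rw [card_univ, Fintype.card_fin]
      have hne2 : (univ.image b.2).card ≠ r + 1 := by
        intro hcon
        apply hninj
        have hcon' : (univ.image b.2).card = (univ : Finset (Fin (r + 1))).card := by
          rw [hcon, card_univ, Fintype.card_fin]
        have hio := Finset.card_image_iff.mp hcon'
        rw [coe_univ] at hio
        exact Set.injOn_univ.mp hio
      have hsub : univ \ b.1 ⊆ univ.image b.2 := by
        intro v hv
        rcases hcov v with hh | ⟨k, hk⟩
        · exact absurd hh (mem_sdiff.mp hv).2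
        · exact mem_image.mpr ⟨k, mem_univ _, hk⟩
      have hcards : (univ \ b.1).card = r := by
        rw [card_sdiff_of_subset (subset_univ _), hcard, card_univ, h]
        omega
      have hge := Finset.card_le_card hsub
      have him : (univ.image b.2).card = r := by omega
      have hSeq : univ \ b.1 = univ.image b.2 :=
        Finset.eq_of_subset_of_card_le hsub (by omega)
      refine ⟨b.2, ?_, ?_⟩
      · simp only [mem_filter, mem_univ, true_and]
        exact him
      · refine Prod.ext ?_ rfl
        show univ \ univ.image b.2 = b.1
        rw [← hSeq, Finset.sdiff_sdiff_eq_self (subset_univ _)]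
  have hB : ((univ : Finset (Finset V × (Fin (r + 1) → V))).filter
        (fun p => (p.1.card = 2 ∧ ∀ v : V, v ∈ p.1 ∨ ∃ k, p.2 k = v)
          ∧ ¬ Function.Injective p.2)).card
      = ((univ : Finset (Fin (r + 1) × Fin (r + 1))).filter fun p => p.1 < p.2).card
        * (r + 2).descFactorial r := by
    rw [← hB1]
    have key : ((univ : Finset ({p : Fin (r + 1) × Fin (r + 1) // p.1 < p.2} × (Fin r ↪ V)))).card
        = ((univ : Finset (Fin (r + 1) → V)).filter
          (fun f => (univ.image f).card = r)).card := by
      apply Finset.card_bij (i := fun q _ => glue junk q.1.1.1 q.1.1.2 q.2)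
      · intro a _
        simp only [mem_filter, mem_univ, true_and]
        rw [glue_image junk _ _ _ (ne_of_lt a.1.2),
          Finset.card_image_of_injective _ a.2.injective, card_univ, Fintype.card_fin]
      · rintro ⟨⟨⟨i1, j1⟩, hlt1⟩, e1⟩ - ⟨⟨⟨i2, j2⟩, hlt2⟩, e2⟩ - heq
        simp only at heq
        have hset : ∀ k : Fin (r + 1), (k = i1 ∨ k = j1) ↔ (k = i2 ∨ k = j2) := by
          intro k
          exact ((glue_collision junk i1 j1 e1 hlt1 k).symm.trans
            (by rw [heq]; exact glue_collision junk i2 j2 e2 hlt2 k))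
        have v1 : i1.val = i2.val ∨ i1.val = j2.val := by
          rcases (hset i1).mp (Or.inl rfl) with hq | hq <;> simp [hq]
        have v2 : j1.val = i2.val ∨ j1.val = j2.val := by
          rcases (hset j1).mp (Or.inr rfl) with hq | hq <;> simp [hq]
        have v3 : i2.val = i1.val ∨ i2.val = j1.val := by
          rcases (hset i2).mpr (Or.inl rfl) with hq | hq <;> simp [hq]
        have v4 : j2.val = i1.val ∨ j2.val = j1.val := by
          rcases (hset j2).mpr (Or.inr rfl) with hq | hq <;> simp [hq]
        have l1 : i1.val < j1.val := hlt1
        have l2 : i2.val < j2.val := hlt2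
        have hii : i1 = i2 := Fin.ext (by omega)
        have hjj : j1 = j2 := Fin.ext (by omega)
        subst hii
        subst hjj
        have he : e1 = e2 := by
          apply DFunLike.coe_injective
          funext x
          have u1 := glue_succAbove junk i1 j1 e1 x
          have u2 := glue_succAbove junk i1 j1 e2 x
          rw [heq] at u1
          exact u1.symm.trans u2
        subst he
        rfl
      · intro f hf
        simp only [mem_filter, mem_univ, true_and] at hf
        have hninj : ¬ Function.Injective f := by
          intro hinj
          rw [Finset.card_image_of_injective _ hinj, card_univ, Fintype.card_fin] at hf
          omega
        rw [Function.not_injective_iff] at hninj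
        obtain ⟨a, b, hfab, hab⟩ := hninj
        obtain ⟨i, j, hij, hfij⟩ : ∃ i j : Fin (r + 1), i < j ∧ f i = f j := by
          rcases Ne.lt_or_gt hab with hl | hl
          exacts [⟨a, b, hl, hfab⟩, ⟨b, a, hl, hfab.symm⟩]
        have himage : univ.image (fun x => f (j.succAbove x)) = univ.image f := by
          apply Finset.Subset.antisymm
          · intro v hv
            obtain ⟨x, -, rfl⟩ := mem_image.mp hv
            exact mem_image.mpr ⟨j.succAbove x, mem_univ _, rfl⟩
          · intro v hv
            obtain ⟨k, -, rfl⟩ := mem_image.mp hv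
            by_cases hkj : k = j
            · obtain ⟨x, -, hx2⟩ := aux_some (hij.ne : i ≠ j)
              refine mem_image.mpr ⟨x, mem_univ _, ?_⟩
              show f (j.succAbove x) = f k
              rw [hx2, hfij, hkj]
            · obtain ⟨x, -, hx2⟩ := aux_some hkj
              exact mem_image.mpr ⟨x, mem_univ _, by rw [hx2]⟩
        have hinj2 : Function.Injective (fun x : Fin r => f (j.succAbove x)) := by
          have hcard2 : (univ.image (fun x : Fin r => f (j.succAbove x))).card
              = (univ : Finset (Fin r)).card := by
            rw [himage, hf, card_univ, Fintype.card_fin]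
          have hio := Finset.card_image_iff.mp hcard2
          rw [coe_univ] at hio
          exact Set.injOn_univ.mp hio
        refine ⟨(⟨(i, j), hij⟩, ⟨_, hinj2⟩), mem_univ _, ?_⟩
        funext k
        by_cases hk : k = j
        · rw [hk]
          obtain ⟨x, hx, hval⟩ := glue_at junk i j ⟨_, hinj2⟩ hij.ne
          rw [hval]
          show f (j.succAbove x) = f j
          rw [hx, hfij]
        · obtain ⟨x, hx, hval⟩ := glue_apply_ne junk i j ⟨_, hinj2⟩ hk
          rw [hval]
          show f (j.succAbove x) = f k
          rw [hx]
    rw [← key, card_univ, Fintype.card_prod, Fintype.card_subtype,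
      Fintype.card_embedding_eq, Fintype.card_fin, h]
  -- assemble
  rw [show (r + 2) ^ 2 + (r + 2) - 2 = r * r + 5 * r + 4 by
    have hsq : (r + 2) ^ 2 = r * r + 4 * r + 4 := by ring
    omega]
  have hNLT : 2 * ((univ : Finset (Fin (r + 1) × Fin (r + 1))).filter
      fun p => p.1 < p.2).card = (r + 1) * (r + 1) - (r + 1) := aux_card_lt_pairs (r + 1)
  have hNLT' : 2 * ((univ : Finset (Fin (r + 1) × Fin (r + 1))).filter
      fun p => p.1 < p.2).card = (r + 1) * r := by
    have hexp : (r + 1) * (r + 1) = (r + 1) * r + (r + 1) := by ring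
    omega
  have hdF : (r + 2).descFactorial (r + 1) = 2 * (r + 2).descFactorial r := by
    rw [Nat.descFactorial_succ]
    congr 1
    omega
  have hfac : (r + 2).factorial = 2 * (r + 2).descFactorial r := by
    have h1 : (r + 2).descFactorial (r + 2) = (r + 2).factorial := Nat.descFactorial_self _
    rw [Nat.descFactorial_succ, hdF] at h1
    have h2 : r + 2 - (r + 1) = 1 := by omega
    rw [h2, one_mul] at h1
    exact h1.symm
  rw [← hsplit, hA, hB]
  have calckey : (r + 2).factorial * (r * r + 5 * r + 4)
      = ((r + 2).descFactorial (r + 1) * (r + 1)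
        + ((univ : Finset (Fin (r + 1) × Fin (r + 1))).filter fun p => p.1 < p.2).card
          * (r + 2).descFactorial r) * 4 := by
    rw [hfac, hdF]
    set d := (r + 2).descFactorial r with hd
    set c := ((univ : Finset (Fin (r + 1) × Fin (r + 1))).filter fun p => p.1 < p.2).card with hc
    have expand : (2 * d * (r + 1) + c * d) * 4
        = 2 * d * (4 * (r + 1)) + (2 * c) * (2 * d) := by ring
    rw [expand, hNLT']
    ring
  omega
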